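/- (Per-iteration inequality for Frank-Wolfe with an inexact gradient, convex case) Let K ⊆ ℝ^d be a convex compact set with diameter D = sup_{x,y∈K} ‖x−y‖. Let f : ℝ^d → ℝ be convex, differentiable, with L-Lipschitz gradient on K, and let x* be a minimizer of f over K. Let x ∈ K, let ḡ ∈ ℝ^d be arbitrary, let v ∈ K satisfy ⟨v, ḡ⟩ ≤ ⟨u, ḡ⟩ for all u ∈ K, let η ∈ [0,1], and set x⁺ = x + η(v − x). Then f(x⁺) − f(x*) ≤ (1 − η)(f(x) − f(x*)) + η·D·‖∇f(x) − ḡ‖ + (L/2)·η²·D². -/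

import Mathlib

open scoped RealInnerProductSpace

section Helpers

variable {E : Type*} [NormedAddCommGroup E] [InnerProductSpace ℝ E] [CompleteSpace E]

private lemma fw_lineDeriv (f : E → ℝ) (hdiff : Differentiable ℝ f) (x y : E) (t : ℝ) :
    HasDerivAt (fun s : ℝ => f (x + s • (y - x)))
      ⟪gradient f (x + t • (y - x)), y - x⟫ t := by
  have h1 : HasDerivAt (fun s : ℝ => x + s • (y - x)) (y - x) t := by
    simpa using ((hasDerivAt_id t).smul_const (y - x)).const_add x
  have h2 := (hdiff (x + t • (y - x))).hasGradientAt
  rw [hasGradientAt_iff_hasFDerivAt] at h2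
  have := h2.comp_hasDerivAt t h1
  exact this

private lemma fw_comb {K : Set E} (hK : Convex ℝ K) {x y : E} (hx : x ∈ K) (hy : y ∈ K)
    {t : ℝ} (ht0 : 0 ≤ t) (ht1 : t ≤ 1) : x + t • (y - x) ∈ K := by
  have := hK hx hy (by linarith : (0:ℝ) ≤ 1 - t) ht0 (by ring)
  have heq : (1 - t) • x + t • y = x + t • (y - x) := by
    simp [smul_sub, sub_smul]; abel
  rwa [heq] at this

private lemma fw_grad_ineq {K : Set E} {f : E → ℝ} (hconv : ConvexOn ℝ K f)
    (hdiff : Differentiable ℝ f) {x y : E} (hx : x ∈ K) (hy : y ∈ K) :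
    f x + ⟪gradient f x, y - x⟫ ≤ f y := by
  set g : ℝ → ℝ := fun s => f (x + s • (y - x)) with hg
  have hder : HasDerivAt g ⟪gradient f x, y - x⟫ 0 := by
    simpa using fw_lineDeriv f hdiff x y 0
  rw [hasDerivAt_iff_tendsto_slope] at hder
  have hder' := hder.mono_left (nhdsWithin_mono 0 (by intro s hs; exact ne_of_gt hs :
    Set.Ioi (0:ℝ) ⊆ {0}ᶜ))
  have hbound : ∀ᶠ t in nhdsWithin 0 (Set.Ioi (0:ℝ)), slope g 0 t ≤ f y - f x := by
    filter_upwards [Ioo_mem_nhdsGT_of_mem (Set.mem_Ico.2 ⟨le_refl (0:ℝ), one_pos⟩)]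
      with t ht
    have ht0 : 0 < t := ht.1
    have ht1 : t < 1 := ht.2
    have hconvpt : g t ≤ (1 - t) * f x + t * f y := by
      have := hconv.2 hx hy (by linarith : (0:ℝ) ≤ 1 - t) (le_of_lt ht0) (by ring)
      have heq : (1 - t) • x + t • y = x + t • (y - x) := by
        simp [smul_sub, sub_smul]; abel
      rw [heq] at this
      simpa [hg] using this
    have hg0 : g 0 = f x := by simp [hg]
    rw [slope_def_field, hg0, sub_zero, div_le_iff₀ ht0]
    nlinarith
  have := le_of_tendsto hder' hbound
  linarith

private lemma fw_descent {K : Set E} (hK : Convex ℝ K) {f : E → ℝ}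
    (hdiff : Differentiable ℝ f) {L : ℝ}
    (hsmooth : ∀ a ∈ K, ∀ b ∈ K, ‖gradient f a - gradient f b‖ ≤ L * ‖a - b‖)
    {x y : E} (hx : x ∈ K) (hy : y ∈ K) :
    f y ≤ f x + ⟪gradient f x, y - x⟫ + L / 2 * ‖y - x‖ ^ 2 := by
  set φ : ℝ → ℝ := fun t =>
    f (x + t • (y - x)) - t * ⟪gradient f x, y - x⟫ - L / 2 * t ^ 2 * ‖y - x‖ ^ 2 with hφ
  have hder : ∀ t : ℝ, HasDerivAt φ
      (⟪gradient f (x + t • (y - x)), y - x⟫ - ⟪gradient f x, y - x⟫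
        - L * t * ‖y - x‖ ^ 2) t := by
    intro t
    have h1 := fw_lineDeriv f hdiff x y t
    have h2 : HasDerivAt (fun t : ℝ => t * ⟪gradient f x, y - x⟫)
        ⟪gradient f x, y - x⟫ t := by simpa using (hasDerivAt_id t).mul_const _
    have h3 : HasDerivAt (fun t : ℝ => L / 2 * t ^ 2 * ‖y - x‖ ^ 2)
        (L * t * ‖y - x‖ ^ 2) t := by
      have := ((hasDerivAt_pow 2 t).const_mul (L / 2)).mul_const (‖y - x‖ ^ 2)
      exact this.congr_deriv (by ring)
    exact (h1.sub h2).sub h3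
  have hmono : AntitoneOn φ (Set.Icc 0 1) := by
    apply antitoneOn_of_deriv_nonpos (convex_Icc 0 1)
    · exact fun t _ => ((hder t).differentiableAt).continuousAt.continuousWithinAt
    · intro t ht
      exact (hder t).differentiableAt.differentiableWithinAt
    · intro t ht
      rw [interior_Icc] at ht
      rw [(hder t).deriv]
      have hct : x + t • (y - x) ∈ K := fw_comb hK hx hy ht.1.le ht.2.le
      have h4 : ⟪gradient f (x + t • (y - x)) - gradient f x, y - x⟫
          ≤ ‖gradient f (x + t • (y - x)) - gradient f x‖ * ‖y - x‖ :=
        real_inner_le_norm _ _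
      have h5 : ‖gradient f (x + t • (y - x)) - gradient f x‖
          ≤ L * (t * ‖y - x‖) := by
        have := hsmooth _ hct _ hx
        have heq : ‖x + t • (y - x) - x‖ = t * ‖y - x‖ := by
          rw [add_sub_cancel_left, norm_smul, Real.norm_eq_abs, abs_of_pos ht.1]
        rwa [heq] at this
      have h6 : ‖gradient f (x + t • (y - x)) - gradient f x‖ * ‖y - x‖
          ≤ L * (t * ‖y - x‖) * ‖y - x‖ :=
        mul_le_mul_of_nonneg_right h5 (norm_nonneg _)
      rw [inner_sub_left] at h4
      nlinarith
  have key := hmono (Set.left_mem_Icc.2 zero_le_one) (Set.right_mem_Icc.2 zero_le_one)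
    zero_le_one
  have hφ0 : φ 0 = f x := by simp [hφ]
  have hφ1 : φ 1 = f y - ⟪gradient f x, y - x⟫ - L / 2 * ‖y - x‖ ^ 2 := by
    simp [hφ]
  rw [hφ0, hφ1] at key
  linarith

end Helpers

/-- per-iteration inequality for Frank-Wolfe with an inexact gradient,
convex case. `K ⊆ ℝ^d` convex compact with diameter `D`, `f` convex and differentiable
with `L`-Lipschitz gradient on `K`, `x*` a minimizer of `f` over `K`, `x ∈ K`,
`v ∈ K` a linear minimizer for `ḡ`, `η ∈ [0,1]`, `x⁺ = x + η(v - x)`. Then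
`f x⁺ - f x* ≤ (1-η)(f x - f x*) + η·D·‖∇f x - ḡ‖ + (L/2)·η²·D²`. -/
theorem stmt5 {d : ℕ} (K : Set (EuclideanSpace ℝ (Fin d)))
    (hKconv : Convex ℝ K) (hKcomp : IsCompact K)
    (D L : ℝ) (hD : D = Metric.diam K)
    (f : EuclideanSpace ℝ (Fin d) → ℝ)
    (hconv : ConvexOn ℝ K f)
    (hdiff : Differentiable ℝ f)
    (hsmooth : ∀ x ∈ K, ∀ y ∈ K, ‖gradient f x - gradient f y‖ ≤ L * ‖x - y‖)
    (xstar : EuclideanSpace ℝ (Fin d)) (hxstarK : xstar ∈ K)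
    (hmin : ∀ y ∈ K, f xstar ≤ f y)
    (x : EuclideanSpace ℝ (Fin d)) (hx : x ∈ K)
    (gbar : EuclideanSpace ℝ (Fin d))
    (v : EuclideanSpace ℝ (Fin d)) (hv : v ∈ K)
    (hvopt : ∀ u ∈ K, ⟪v, gbar⟫ ≤ ⟪u, gbar⟫)
    (η : ℝ) (hη0 : 0 ≤ η) (hη1 : η ≤ 1)
    (xplus : EuclideanSpace ℝ (Fin d)) (hxplus : xplus = x + η • (v - x)) :
    f xplus - f xstar ≤ (1 - η) * (f x - f xstar)
      + η * D * ‖gradient f x - gbar‖ + L / 2 * η ^ 2 * D ^ 2 := by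
  by_cases hL : 0 ≤ L
  · -- main case
    have hxplusK : xplus ∈ K := hxplus ▸ fw_comb hKconv hx hv hη0 hη1
    have hDnn : 0 ≤ D := hD ▸ Metric.diam_nonneg
    have hvxs : ‖v - xstar‖ ≤ D := by
      rw [hD, ← dist_eq_norm]
      exact Metric.dist_le_diam_of_mem hKcomp.isBounded hv hxstarK
    have hvx : ‖v - x‖ ≤ D := by
      rw [hD, ← dist_eq_norm]
      exact Metric.dist_le_diam_of_mem hKcomp.isBounded hv hx
    have hdesc := fw_descent hKconv hdiff hsmooth hx hxplusK
    have hxpx : xplus - x = η • (v - x) := by rw [hxplus]; abel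
    rw [hxpx] at hdesc
    rw [real_inner_smul_right] at hdesc
    have hnorm : ‖η • (v - x)‖ = η * ‖v - x‖ := by
      rw [norm_smul, Real.norm_eq_abs, abs_of_nonneg hη0]
    rw [hnorm] at hdesc
    have hgrad := fw_grad_ineq hconv hdiff hx hxstarK
    have hkey : ⟪gradient f x, v - x⟫ ≤ ⟪gradient f x, xstar - x⟫
        + ‖gradient f x - gbar‖ * D := by
      have h1 : ⟪gradient f x, v - x⟫ = ⟪gradient f x - gbar, v - xstar⟫
          + (⟪v, gbar⟫ - ⟪xstar, gbar⟫) + ⟪gradient f x, xstar - x⟫ := by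
        simp only [inner_sub_left, inner_sub_right, real_inner_comm gbar]
        ring
      have h2 : ⟪gradient f x - gbar, v - xstar⟫
          ≤ ‖gradient f x - gbar‖ * ‖v - xstar‖ := real_inner_le_norm _ _
      have h3 : ⟪v, gbar⟫ - ⟪xstar, gbar⟫ ≤ 0 := by
        have := hvopt xstar hxstarK; linarith
      have h4 : ‖gradient f x - gbar‖ * ‖v - xstar‖ ≤ ‖gradient f x - gbar‖ * D :=
        mul_le_mul_of_nonneg_left hvxs (norm_nonneg _)
      linarith
    have hsq : L / 2 * (η * ‖v - x‖) ^ 2 ≤ L / 2 * η ^ 2 * D ^ 2 := by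
      have h0 : 0 ≤ ‖v - x‖ := norm_nonneg _
      have h1 : ‖v - x‖ ^ 2 ≤ D ^ 2 := by nlinarith
      calc L / 2 * (η * ‖v - x‖) ^ 2 = L / 2 * η ^ 2 * ‖v - x‖ ^ 2 := by ring
        _ ≤ L / 2 * η ^ 2 * D ^ 2 :=
          mul_le_mul_of_nonneg_left h1 (by positivity)
    have hmul := mul_le_mul_of_nonneg_left hkey hη0
    have hmul2 := mul_le_mul_of_nonneg_left (show ⟪gradient f x, xstar - x⟫
        ≤ f xstar - f x by linarith) hη0
    nlinarith
  · -- degenerate case: L < 0 forces K to be a subsingleton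
    have hsub : ∀ a ∈ K, ∀ b ∈ K, a = b := by
      intro a ha b hb
      by_contra hne
      have h1 := hsmooth a ha b hb
      have h2 : 0 < ‖a - b‖ := by
        rw [norm_pos_iff]
        exact sub_ne_zero_of_ne hne
      nlinarith [norm_nonneg (gradient f a - gradient f b)]
    have hvx : v = x := hsub v hv x hx
    have hxsx : xstar = x := hsub xstar hxstarK x hx
    have hxpx : xplus = x := by rw [hxplus, hvx]; simp
    have hDz : D = 0 := by
      rw [hD]
      have : K.Subsingleton := fun a ha b hb => hsub a ha b hb
      exact Metric.diam_subsingleton this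
    rw [hvx, hxsx, hxpx, hDz] at *
    simp
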